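/- For every positive integer e, the 2 × (e+1) matrix over Z_{2^e} × Z_2 whose first row is (0,1), (1,0), (2,0), (4,0), ..., (2^{e−1},0) and whose second row is (2^{e−1},1), (0,1), (1,0), (2,0), ..., (2^{e−2},0) is a (Z_{2^e} × Z_2, 2, 0) contracted difference matrix; in particular, a (Z_{2^e} × Z_2, 2, 0) contracted difference matrix exists. -/

import Mathlib

def IsAddDiffMatrix {G : Type*} [AddGroup G] {I J : Type*} (A : I → J → G) (lam : ℕ) : Prop :=
  Nat.card J = lam * Nat.card G ∧
  ∀ i ℓ : I, i ≠ ℓ → ∀ g : G, Nat.card {j : J // A i j - A ℓ j = g} = lam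

/-- The `p`-expansion of a `k × l` matrix over an abelian group: the `p^k × p^l` matrix
whose `(r, c)` entry is `r M cᵀ`. -/
def pExpand (p : ℕ) {G : Type*} [AddCommGroup G] {k l : ℕ} (M : Fin k → Fin l → G) :
    (Fin k → ZMod p) → (Fin l → ZMod p) → G :=
  fun r c => ∑ i, ∑ j, ((r i).val * (c j).val) • M i j

/-- A `k × l` matrix `M` over an abelian `p`-group `G` (of order `p^n`, with `l = n + s`)
is a `(G, k, s)` contracted difference matrix if its `p`-expansion is a `(G, p^k, p^s)`
difference matrix. -/
def IsCDM (p : ℕ) {G : Type*} [AddCommGroup G] {k l : ℕ} (M : Fin k → Fin l → G)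
    (s : ℕ) : Prop :=
  IsAddDiffMatrix (pExpand p M) (p ^ s)

def Pe (e : ℕ) (j : Fin (e + 1)) : ℤ := if (j : ℕ) = 0 then 0 else 2 ^ ((j : ℕ) - 1)
def Qe (e : ℕ) (j : Fin (e + 1)) : ℤ :=
  if (j : ℕ) = 0 then 2 ^ (e - 1) else if (j : ℕ) = 1 then 0 else 2 ^ ((j : ℕ) - 2)
def Ue (e : ℕ) (j : Fin (e + 1)) : ℤ := if (j : ℕ) = 0 then 1 else 0
def Ve (e : ℕ) (j : Fin (e + 1)) : ℤ :=
  if (j : ℕ) = 0 then 1 else if (j : ℕ) = 1 then 1 else 0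

lemma lemA {ι : Type*} [Fintype ι] [DecidableEq ι] (m : ℕ) (X b : ι → ℤ) (pw : ι → ℕ)
    (o : ι → ℤ)
    (hb : ∀ i, b i = 1 ∨ b i = 0 ∨ b i = -1)
    (hX : ∀ i, b i ≠ 0 → X i ≠ 0 → X i = o i * 2 ^ pw i ∧ Odd (o i) ∧ pw i < m)
    (hinj : ∀ i j, b i ≠ 0 → X i ≠ 0 → b j ≠ 0 → X j ≠ 0 → pw i = pw j → i = j)
    (hdvd : (2 : ℤ) ^ m ∣ ∑ i, b i * X i) :
    ∀ i, X i ≠ 0 → b i = 0 := by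
  by_contra hcon
  push_neg at hcon
  obtain ⟨i0, hXi0, hbi0⟩ := hcon
  set T : Finset ι := Finset.univ.filter (fun i => b i ≠ 0 ∧ X i ≠ 0) with hT
  have hTne : T.Nonempty := ⟨i0, by simp [hT, hbi0, hXi0]⟩
  obtain ⟨t, htT, htmin⟩ := T.exists_min_image pw hTne
  have htb : b t ≠ 0 ∧ X t ≠ 0 := by simpa [hT] using htT
  obtain ⟨hXt, hot, hptm⟩ := hX t htb.1 htb.2
  have hsplit : ∑ i, b i * X i = b t * X t + ∑ i ∈ Finset.univ.erase t, b i * X i := by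
    rw [add_comm, Finset.sum_erase_add _ _ (Finset.mem_univ t)]
  have hdvd2 : (2 : ℤ) ^ (pw t + 1) ∣ ∑ i ∈ Finset.univ.erase t, b i * X i := by
    refine Finset.dvd_sum ?_
    intro i hi
    by_cases hbi : b i = 0
    · simp [hbi]
    by_cases hXi : X i = 0
    · simp [hXi]
    have hiT : i ∈ T := by simp [hT, hbi, hXi]
    have hne : i ≠ t := Finset.ne_of_mem_erase hi
    have hpw : pw t < pw i := by
      rcases lt_or_eq_of_le (htmin i hiT) with h | h
      · exact h
      · exact absurd (hinj i t hbi hXi htb.1 htb.2 h.symm) hne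
    obtain ⟨hXi', _, _⟩ := hX i hbi hXi
    refine Dvd.dvd.mul_left ?_ (b i)
    rw [hXi']
    exact Dvd.dvd.mul_left (pow_dvd_pow 2 hpw) _
  have hdvdall : (2 : ℤ) ^ (pw t + 1) ∣ ∑ i, b i * X i :=
    dvd_trans (pow_dvd_pow 2 hptm) hdvd
  have hdvdt : (2 : ℤ) ^ (pw t + 1) ∣ b t * X t := by
    have := dvd_sub hdvdall hdvd2
    rwa [hsplit, add_sub_cancel_right] at this
  rw [hXt, pow_succ, ← mul_assoc] at hdvdt
  have h2 : (2 : ℤ) ∣ b t * o t := by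
    have hne : (2 : ℤ) ^ pw t ≠ 0 := pow_ne_zero _ two_ne_zero
    rw [mul_comm ((2:ℤ)^ pw t) 2] at hdvdt
    exact (mul_dvd_mul_iff_right hne).mp hdvdt
  have hodd : Odd (b t * o t) := by
    rcases hb t with h | h | h
    · rw [h, one_mul]; exact hot
    · exact absurd h htb.1
    · rw [h]; simpa using hot.neg
  rw [← Int.not_even_iff_odd] at hodd
  exact hodd (even_iff_two_dvd.mpr h2)

lemma case10 (e : ℕ) (he : 0 < e) (b : Fin (e + 1) → ℤ)
    (hb : ∀ j, b j = 1 ∨ b j = 0 ∨ b j = -1)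
    (h1 : (2 : ℤ) ^ e ∣ ∑ j, b j * Pe e j)
    (h2 : (2 : ℤ) ∣ ∑ j, b j * Ue e j) : ∀ j, b j = 0 := by
  have hA := lemA e (Pe e) b (fun j => (j : ℕ) - 1) (fun _ => 1) hb ?_ ?_ h1
  · have hb0 : b 0 = 0 := by
      obtain ⟨e', rfl⟩ : ∃ e', e = e' + 1 := ⟨e - 1, by omega⟩
      rw [Fin.sum_univ_succ] at h2
      simp [Ue] at h2
      rcases hb 0 with h | h | h <;> omega
    intro j
    by_cases hj : (j : ℕ) = 0
    · have : j = 0 := by ext; simpa using hj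
      rw [this]; exact hb0
    · exact hA j (by simp [Pe, hj])
  · intro i _ hXi
    have hne : (i : ℕ) ≠ 0 := by intro h; exact hXi (by simp [Pe, h])
    have hlt := i.isLt
    refine ⟨?_, odd_one, ?_⟩
    · simp [Pe, hne]
    · show (i : ℕ) - 1 < e; omega
  · intro i j _ hXi _ hXj hpw
    have hi : (i : ℕ) ≠ 0 := by intro h; exact hXi (by simp [Pe, h])
    have hj : (j : ℕ) ≠ 0 := by intro h; exact hXj (by simp [Pe, h])
    have hpw' : (i : ℕ) - 1 = (j : ℕ) - 1 := hpw
    ext; omega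

lemma case01 (e : ℕ) (he : 0 < e) (b : Fin (e + 1) → ℤ)
    (hb : ∀ j, b j = 1 ∨ b j = 0 ∨ b j = -1)
    (h1 : (2 : ℤ) ^ e ∣ ∑ j, b j * Qe e j)
    (h2 : (2 : ℤ) ∣ ∑ j, b j * Ve e j) : ∀ j, b j = 0 := by
  obtain ⟨e', rfl⟩ : ∃ e', e = e' + 1 := ⟨e - 1, by omega⟩
  have hA := lemA (e' + 1) (Qe (e' + 1)) b
      (fun j => if (j : ℕ) = 0 then e' else (j : ℕ) - 2) (fun _ => 1) hb ?_ ?_ h1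
  · have hbj : ∀ j : Fin (e' + 2), (j : ℕ) ≠ 1 → b j = 0 := by
      intro j hj
      refine hA j ?_
      by_cases h0 : (j : ℕ) = 0
      · simp [Qe, h0]
      · simp [Qe, h0, hj]
    have hb0 : b 0 = 0 := hbj 0 (by simp)
    have hb1 : b 1 = 0 := by
      rw [Fin.sum_univ_succ, Fin.sum_univ_succ] at h2
      simp [Ve, hb0] at h2
      rcases hb 1 with h | h | h <;> omega
    intro j
    by_cases hj : (j : ℕ) = 1
    · have : j = 1 := by ext; simpa using hj
      rw [this]; exact hb1
    · exact hbj j hj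
  · intro i _ hXi
    have hlt := i.isLt
    by_cases h0 : (i : ℕ) = 0
    · refine ⟨?_, odd_one, ?_⟩
      · simp [Qe, h0]
      · show (if (i : ℕ) = 0 then e' else (i : ℕ) - 2) < e' + 1
        rw [if_pos h0]; omega
    · have h1' : (i : ℕ) ≠ 1 := by intro h; exact hXi (by simp [Qe, h0, h])
      refine ⟨?_, odd_one, ?_⟩
      · simp [Qe, h0, h1']
      · show (if (i : ℕ) = 0 then e' else (i : ℕ) - 2) < e' + 1
        rw [if_neg h0]; omega
  · intro i j _ hXi _ hXj hpw
    have hlti := i.isLt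
    have hltj := j.isLt
    have hi1 : (i : ℕ) ≠ 1 := by
      intro h; exact hXi (by simp [Qe, h])
    have hj1 : (j : ℕ) ≠ 1 := by
      intro h; exact hXj (by simp [Qe, h])
    have hpw' : (if (i : ℕ) = 0 then e' else (i : ℕ) - 2)
        = (if (j : ℕ) = 0 then e' else (j : ℕ) - 2) := hpw
    ext
    by_cases h0 : (i : ℕ) = 0 <;> by_cases h0' : (j : ℕ) = 0 <;>
      simp [h0, h0'] at hpw' ⊢ <;> omega

lemma case11 (e : ℕ) (he : 0 < e) (b : Fin (e + 1) → ℤ)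
    (hb : ∀ j, b j = 1 ∨ b j = 0 ∨ b j = -1)
    (h1 : (2 : ℤ) ^ e ∣ ∑ j, b j * (Pe e j + Qe e j))
    (h2 : (2 : ℤ) ∣ ∑ j, b j * (Ue e j + Ve e j)) : ∀ j, b j = 0 := by
  obtain ⟨e', rfl⟩ : ∃ e', e = e' + 1 := ⟨e - 1, by omega⟩
  have hb1 : b 1 = 0 := by
    rw [Fin.sum_univ_succ, Fin.sum_univ_succ] at h2
    simp [Ue, Ve] at h2
    rcases hb 0 with h | h | h <;> rcases hb 1 with h' | h' | h' <;> omega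
  have hA := lemA (e' + 1) (fun j => Pe (e' + 1) j + Qe (e' + 1) j) b
      (fun j => if (j : ℕ) = 0 then e' else (j : ℕ) - 2)
      (fun j => if (j : ℕ) = 0 then 1 else 3) hb ?_ ?_ h1
  · intro j
    refine hA j ?_
    by_cases h0 : (j : ℕ) = 0
    · simp [Pe, Qe, h0]
    · by_cases h1' : (j : ℕ) = 1
      · simp [Pe, Qe, h0, h1']
      · have : 0 < (2:ℤ) ^ ((j:ℕ) - 1) + 2 ^ ((j:ℕ) - 2) := by positivity
        show ¬(Pe (e' + 1) j + Qe (e' + 1) j = 0)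
        simp only [Pe, Qe, if_neg h0, if_neg h1']
        omega
  · intro i hbi hXi
    have hlt := i.isLt
    by_cases h0 : (i : ℕ) = 0
    · refine ⟨?_, ?_, ?_⟩
      · simp [Pe, Qe, h0]
      · show Odd (if (i : ℕ) = 0 then (1:ℤ) else 3)
        rw [if_pos h0]; exact odd_one
      · show (if (i : ℕ) = 0 then e' else (i : ℕ) - 2) < e' + 1
        rw [if_pos h0]; omega
    · have h1' : (i : ℕ) ≠ 1 := by
        intro h
        exact hbi (by rw [show i = 1 from by ext; simpa using h]; exact hb1)
      refine ⟨?_, ?_, ?_⟩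
      · have hrw : (i : ℕ) - 1 = ((i : ℕ) - 2) + 1 := by omega
        show Pe (e' + 1) i + Qe (e' + 1) i = _
        simp only [Pe, Qe, if_neg h0, if_neg h1']
        rw [hrw, pow_succ]
        ring
      · show Odd (if (i : ℕ) = 0 then (1:ℤ) else 3)
        rw [if_neg h0]; exact ⟨1, by ring⟩
      · show (if (i : ℕ) = 0 then e' else (i : ℕ) - 2) < e' + 1
        rw [if_neg h0]; omega
  · intro i j hbi hXi hbj hXj hpw
    have hlti := i.isLt
    have hltj := j.isLt
    have hi1 : (i : ℕ) ≠ 1 := by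
      intro h
      exact hbi (by rw [show i = 1 from by ext; simpa using h]; exact hb1)
    have hj1 : (j : ℕ) ≠ 1 := by
      intro h
      exact hbj (by rw [show j = 1 from by ext; simpa using h]; exact hb1)
    have hpw' : (if (i : ℕ) = 0 then e' else (i : ℕ) - 2)
        = (if (j : ℕ) = 0 then e' else (j : ℕ) - 2) := hpw
    ext
    by_cases h0 : (i : ℕ) = 0 <;> by_cases h0' : (j : ℕ) = 0 <;>
      simp [h0, h0'] at hpw' ⊢ <;> omega

lemma case1m1 (e : ℕ) (he : 0 < e) (b : Fin (e + 1) → ℤ)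
    (hb : ∀ j, b j = 1 ∨ b j = 0 ∨ b j = -1)
    (h1 : (2 : ℤ) ^ e ∣ ∑ j, b j * (Pe e j - Qe e j))
    (h2 : (2 : ℤ) ∣ ∑ j, b j * (Ue e j - Ve e j)) : ∀ j, b j = 0 := by
  obtain ⟨e', rfl⟩ : ∃ e', e = e' + 1 := ⟨e - 1, by omega⟩
  have hb1 : b 1 = 0 := by
    rw [Fin.sum_univ_succ, Fin.sum_univ_succ] at h2
    simp [Ue, Ve] at h2
    rcases hb 1 with h' | h' | h' <;> omega
  have hA := lemA (e' + 1) (fun j => Pe (e' + 1) j - Qe (e' + 1) j) b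
      (fun j => if (j : ℕ) = 0 then e' else (j : ℕ) - 2)
      (fun j => if (j : ℕ) = 0 then -1 else 1) hb ?_ ?_ h1
  · intro j
    refine hA j ?_
    by_cases h0 : (j : ℕ) = 0
    · simp [Pe, Qe, h0]
    · by_cases h1' : (j : ℕ) = 1
      · simp [Pe, Qe, h0, h1']
      · have hrw : (j : ℕ) - 1 = ((j : ℕ) - 2) + 1 := by omega
        have : (0:ℤ) < 2 ^ ((j:ℕ) - 2) := by positivity
        show ¬(Pe (e' + 1) j - Qe (e' + 1) j = 0)
        simp only [Pe, Qe, if_neg h0, if_neg h1']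
        rw [hrw, pow_succ]
        omega
  · intro i hbi hXi
    have hlt := i.isLt
    by_cases h0 : (i : ℕ) = 0
    · refine ⟨?_, ?_, ?_⟩
      · show Pe (e' + 1) i - Qe (e' + 1) i = _
        simp [Pe, Qe, h0]
      · show Odd (if (i : ℕ) = 0 then (-1:ℤ) else 1)
        rw [if_pos h0]; exact ⟨-1, by ring⟩
      · show (if (i : ℕ) = 0 then e' else (i : ℕ) - 2) < e' + 1
        rw [if_pos h0]; omega
    · have h1' : (i : ℕ) ≠ 1 := by
        intro h
        exact hbi (by rw [show i = 1 from by ext; simpa using h]; exact hb1)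
      refine ⟨?_, ?_, ?_⟩
      · have hrw : (i : ℕ) - 1 = ((i : ℕ) - 2) + 1 := by omega
        show Pe (e' + 1) i - Qe (e' + 1) i = _
        simp only [Pe, Qe, if_neg h0, if_neg h1']
        rw [hrw, pow_succ]
        ring
      · show Odd (if (i : ℕ) = 0 then (-1:ℤ) else 1)
        rw [if_neg h0]; exact odd_one
      · show (if (i : ℕ) = 0 then e' else (i : ℕ) - 2) < e' + 1
        rw [if_neg h0]; omega
  · intro i j hbi hXi hbj hXj hpw
    have hlti := i.isLt
    have hltj := j.isLt
    have hi1 : (i : ℕ) ≠ 1 := by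
      intro h
      exact hbi (by rw [show i = 1 from by ext; simpa using h]; exact hb1)
    have hj1 : (j : ℕ) ≠ 1 := by
      intro h
      exact hbj (by rw [show j = 1 from by ext; simpa using h]; exact hb1)
    have hpw' : (if (i : ℕ) = 0 then e' else (i : ℕ) - 2)
        = (if (j : ℕ) = 0 then e' else (j : ℕ) - 2) := hpw
    ext
    by_cases h0 : (i : ℕ) = 0 <;> by_cases h0' : (j : ℕ) = 0 <;>
      simp [h0, h0'] at hpw' ⊢ <;> omega

lemma core (e : ℕ) (he : 0 < e) (a0 a1 : ℤ)
    (ha0 : a0 = 1 ∨ a0 = 0 ∨ a0 = -1) (ha1 : a1 = 1 ∨ a1 = 0 ∨ a1 = -1)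
    (hne : ¬(a0 = 0 ∧ a1 = 0))
    (b : Fin (e + 1) → ℤ) (hb : ∀ j, b j = 1 ∨ b j = 0 ∨ b j = -1)
    (h1 : (2 : ℤ) ^ e ∣ ∑ j, b j * (a0 * Pe e j + a1 * Qe e j))
    (h2 : (2 : ℤ) ∣ ∑ j, b j * (a0 * Ue e j + a1 * Ve e j)) : ∀ j, b j = 0 := by
  have hbneg : ∀ j, -(b j) = 1 ∨ -(b j) = 0 ∨ -(b j) = -1 := by
    intro j; rcases hb j with h | h | h <;> simp [h]
  rcases ha0 with rfl | rfl | rfl <;> rcases ha1 with rfl | rfl | rfl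
  · -- (1,1)
    refine case11 e he b hb ?_ ?_
    · rw [show (∑ j, b j * (Pe e j + Qe e j))
        = ∑ j, b j * (1 * Pe e j + 1 * Qe e j) from Finset.sum_congr rfl fun j _ => by ring]
      exact h1
    · rw [show (∑ j, b j * (Ue e j + Ve e j))
        = ∑ j, b j * (1 * Ue e j + 1 * Ve e j) from Finset.sum_congr rfl fun j _ => by ring]
      exact h2
  · -- (1,0)
    refine case10 e he b hb ?_ ?_
    · rw [show (∑ j, b j * Pe e j)
        = ∑ j, b j * (1 * Pe e j + 0 * Qe e j) from Finset.sum_congr rfl fun j _ => by ring]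
      exact h1
    · rw [show (∑ j, b j * Ue e j)
        = ∑ j, b j * (1 * Ue e j + 0 * Ve e j) from Finset.sum_congr rfl fun j _ => by ring]
      exact h2
  · -- (1,-1)
    refine case1m1 e he b hb ?_ ?_
    · rw [show (∑ j, b j * (Pe e j - Qe e j))
        = ∑ j, b j * (1 * Pe e j + -1 * Qe e j) from Finset.sum_congr rfl fun j _ => by ring]
      exact h1
    · rw [show (∑ j, b j * (Ue e j - Ve e j))
        = ∑ j, b j * (1 * Ue e j + -1 * Ve e j) from Finset.sum_congr rfl fun j _ => by ring]
      exact h2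
  · -- (0,1)
    refine case01 e he b hb ?_ ?_
    · rw [show (∑ j, b j * Qe e j)
        = ∑ j, b j * (0 * Pe e j + 1 * Qe e j) from Finset.sum_congr rfl fun j _ => by ring]
      exact h1
    · rw [show (∑ j, b j * Ve e j)
        = ∑ j, b j * (0 * Ue e j + 1 * Ve e j) from Finset.sum_congr rfl fun j _ => by ring]
      exact h2
  · exact absurd ⟨rfl, rfl⟩ hne
  · -- (0,-1)
    intro j
    have := case01 e he (fun j => -(b j)) hbneg ?_ ?_ j
    · omega
    · rw [show (∑ j, -(b j) * Qe e j)
        = ∑ j, b j * (0 * Pe e j + -1 * Qe e j) from Finset.sum_congr rfl fun j _ => by ring]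
      exact h1
    · rw [show (∑ j, -(b j) * Ve e j)
        = ∑ j, b j * (0 * Ue e j + -1 * Ve e j) from Finset.sum_congr rfl fun j _ => by ring]
      exact h2
  · -- (-1,1)
    intro j
    have := case1m1 e he (fun j => -(b j)) hbneg ?_ ?_ j
    · omega
    · rw [show (∑ j, -(b j) * (Pe e j - Qe e j))
        = ∑ j, b j * (-1 * Pe e j + 1 * Qe e j) from Finset.sum_congr rfl fun j _ => by ring]
      exact h1
    · rw [show (∑ j, -(b j) * (Ue e j - Ve e j))
        = ∑ j, b j * (-1 * Ue e j + 1 * Ve e j) from Finset.sum_congr rfl fun j _ => by ring]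
      exact h2
  · -- (-1,0)
    intro j
    have := case10 e he (fun j => -(b j)) hbneg ?_ ?_ j
    · omega
    · rw [show (∑ j, -(b j) * Pe e j)
        = ∑ j, b j * (-1 * Pe e j + 0 * Qe e j) from Finset.sum_congr rfl fun j _ => by ring]
      exact h1
    · rw [show (∑ j, -(b j) * Ue e j)
        = ∑ j, b j * (-1 * Ue e j + 0 * Ve e j) from Finset.sum_congr rfl fun j _ => by ring]
      exact h2
  · -- (-1,-1)
    intro j
    have := case11 e he (fun j => -(b j)) hbneg ?_ ?_ j
    · omega
    · rw [show (∑ j, -(b j) * (Pe e j + Qe e j))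
        = ∑ j, b j * (-1 * Pe e j + -1 * Qe e j) from Finset.sum_congr rfl fun j _ => by ring]
      exact h1
    · rw [show (∑ j, -(b j) * (Ue e j + Ve e j))
        = ∑ j, b j * (-1 * Ue e j + -1 * Ve e j) from Finset.sum_congr rfl fun j _ => by ring]
      exact h2


/-- The explicit `2 × (e+1)` matrix over `Z_{2^e} × Z_2` with first row
`(0,1), (1,0), (2,0), (4,0), …, (2^{e-1},0)` and second row
`(2^{e-1},1), (0,1), (1,0), (2,0), …, (2^{e-2},0)` is a `(Z_{2^e} × Z_2, 2, 0)`
contracted difference matrix; in particular such a matrix exists. -/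
theorem stmt_17 (e : ℕ) (he : 0 < e) :
    IsCDM 2
      (fun (i : Fin 2) (j : Fin (e + 1)) =>
        if (i : ℕ) = 0 then
          (if (j : ℕ) = 0 then ((0 : ZMod (2 ^ e)), (1 : ZMod 2))
           else ((2 ^ ((j : ℕ) - 1) : ZMod (2 ^ e)), 0))
        else
          (if (j : ℕ) = 0 then ((2 ^ (e - 1) : ZMod (2 ^ e)), 1)
           else if (j : ℕ) = 1 then (0, 1)
           else ((2 ^ ((j : ℕ) - 2) : ZMod (2 ^ e)), 0)))
      0 ∧
    ∃ M : Fin 2 → Fin (e + 1) → ZMod (2 ^ e) × ZMod 2, IsCDM 2 M 0 := by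
  haveI : NeZero (2 ^ e) := ⟨by positivity⟩
  set M : Fin 2 → Fin (e + 1) → ZMod (2 ^ e) × ZMod 2 := fun i j =>
        if (i : ℕ) = 0 then
          (if (j : ℕ) = 0 then ((0 : ZMod (2 ^ e)), (1 : ZMod 2))
           else ((2 ^ ((j : ℕ) - 1) : ZMod (2 ^ e)), 0))
        else
          (if (j : ℕ) = 0 then ((2 ^ (e - 1) : ZMod (2 ^ e)), 1)
           else if (j : ℕ) = 1 then (0, 1)
           else ((2 ^ ((j : ℕ) - 2) : ZMod (2 ^ e)), 0)) with hMdef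
  have hM0 : ∀ j : Fin (e + 1),
      M 0 j = (((Pe e j : ℤ) : ZMod (2 ^ e)), ((Ue e j : ℤ) : ZMod 2)) := by
    intro j
    by_cases hj : (j : ℕ) = 0 <;> simp [hMdef, Pe, Ue, hj, -Fin.val_eq_zero_iff]
  have hM1 : ∀ j : Fin (e + 1),
      M 1 j = (((Qe e j : ℤ) : ZMod (2 ^ e)), ((Ve e j : ℤ) : ZMod 2)) := by
    intro j
    by_cases hj : (j : ℕ) = 0
    · simp [hMdef, Qe, Ve, hj, -Fin.val_eq_zero_iff]
    · by_cases hj1 : (j : ℕ) = 1 <;> simp [hMdef, Qe, Ve, hj, hj1, -Fin.val_eq_zero_iff]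
  have hcard : Fintype.card (Fin (e + 1) → ZMod 2)
      = Fintype.card (ZMod (2 ^ e) × ZMod 2) := by
    rw [Fintype.card_fun, Fintype.card_prod, ZMod.card, ZMod.card, Fintype.card_fin, pow_succ]
  have key : IsCDM 2 M 0 := by
    constructor
    · rw [pow_zero, one_mul, Nat.card_eq_fintype_card, Nat.card_eq_fintype_card, hcard]
    · intro r ℓ hrl g
      have hinj : Function.Injective (fun c => pExpand 2 M r c - pExpand 2 M ℓ c) := by
        intro c c' hcc
        simp only at hcc
        set a0 : ℤ := ((r 0).val : ℤ) - ((ℓ 0).val : ℤ) with ha0def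
        set a1 : ℤ := ((r 1).val : ℤ) - ((ℓ 1).val : ℤ) with ha1def
        set b : Fin (e + 1) → ℤ := fun j => ((c j).val : ℤ) - ((c' j).val : ℤ) with hbdef
        have hGsum : ∀ (s : Fin 2 → ZMod 2) (d : Fin (e + 1) → ZMod 2),
            pExpand 2 M s d
              = ∑ j, (((s 0).val * (d j).val) • M 0 j + ((s 1).val * (d j).val) • M 1 j) := by
          intro s d
          rw [show pExpand 2 M s d = ∑ i, ∑ j, ((s i).val * (d j).val) • M i j from rfl,
            Fin.sum_univ_two, ← Finset.sum_add_distrib]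
        have hkey : ∑ j, b j • (a0 • M 0 j + a1 • M 1 j) = 0 := by
          have h := sub_eq_zero.mpr hcc
          rw [hGsum r c, hGsum ℓ c, hGsum r c', hGsum ℓ c', ← Finset.sum_sub_distrib,
            ← Finset.sum_sub_distrib, ← Finset.sum_sub_distrib] at h
          rw [← h]
          refine Finset.sum_congr rfl fun j _ => ?_
          simp only [hbdef, ha0def, ha1def, zsmul_eq_mul, nsmul_eq_mul, smul_add]
          push_cast
          ring
        have hkey1 : ∀ j : Fin (e + 1), b j • (a0 • M 0 j + a1 • M 1 j)
            = (((b j * (a0 * Pe e j + a1 * Qe e j) : ℤ) : ZMod (2 ^ e)),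
               ((b j * (a0 * Ue e j + a1 * Ve e j) : ℤ) : ZMod 2)) := by
          intro j
          rw [hM0 j, hM1 j]
          ext
          · simp only [Prod.smul_fst, Prod.fst_add, Prod.smul_fst, zsmul_eq_mul]
            push_cast
            simp only [Prod.fst_add, Prod.fst_mul, Prod.fst_intCast]
          · simp only [Prod.smul_snd, Prod.snd_add, zsmul_eq_mul]
            push_cast
            simp only [Prod.snd_add, Prod.snd_mul, Prod.snd_intCast]
        rw [show (∑ j, b j • (a0 • M 0 j + a1 • M 1 j))
            = ∑ j, (((b j * (a0 * Pe e j + a1 * Qe e j) : ℤ) : ZMod (2 ^ e)),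
               ((b j * (a0 * Ue e j + a1 * Ve e j) : ℤ) : ZMod 2))
          from Finset.sum_congr rfl fun j _ => hkey1 j] at hkey
        rw [Prod.ext_iff] at hkey
        obtain ⟨hk1, hk2⟩ := hkey
        rw [Prod.fst_sum, ← Int.cast_sum] at hk1
        rw [Prod.snd_sum, ← Int.cast_sum] at hk2
        simp only [Prod.fst_zero] at hk1
        simp only [Prod.snd_zero] at hk2
        rw [ZMod.intCast_zmod_eq_zero_iff_dvd] at hk1 hk2
        push_cast at hk1 hk2
        have ha0v : a0 = 1 ∨ a0 = 0 ∨ a0 = -1 := by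
          have := (r 0).val_lt; have := (ℓ 0).val_lt; omega
        have ha1v : a1 = 1 ∨ a1 = 0 ∨ a1 = -1 := by
          have := (r 1).val_lt; have := (ℓ 1).val_lt; omega
        have hbv : ∀ j, b j = 1 ∨ b j = 0 ∨ b j = -1 := by
          intro j
          have := (c j).val_lt; have := (c' j).val_lt
          simp only [hbdef]; omega
        have hane : ¬(a0 = 0 ∧ a1 = 0) := by
          rintro ⟨h0, h1⟩
          apply hrl
          funext i
          have e0 : r 0 = ℓ 0 := ZMod.val_injective 2 (by omega)
          have e1 : r 1 = ℓ 1 := ZMod.val_injective 2 (by omega)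
          fin_cases i
          · exact e0
          · exact e1
        have hzero := core e he a0 a1 ha0v ha1v hane b hbv hk1 hk2
        funext j
        have := hzero j
        refine ZMod.val_injective 2 ?_
        simp only [hbdef] at this
        omega
      have hbij : Function.Bijective (fun c => pExpand 2 M r c - pExpand 2 M ℓ c) :=
        (Fintype.bijective_iff_injective_and_card _).mpr ⟨hinj, hcard⟩
      obtain ⟨c, hc⟩ := hbij.2 g
      rw [pow_zero, Nat.card_eq_one_iff_unique]
      constructor
      · constructor
        intro x y
        exact Subtype.ext (hinj (x.2.trans y.2.symm))
      · exact ⟨⟨c, hc⟩⟩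
  exact ⟨key, ⟨M, key⟩⟩
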